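/- For all 1 ≤ i, j ≤ n and all m, p ∈ ℤ: [ρ(F_i)_m, ρ(F_j)_p] = δ_{i,j+1} · (a_{j,j+1,m+p} + Σ_{q=j+2}^{n} Σ_{s∈ℤ} a_{jq,s} a*_{j+2,q,m+p−s}) − δ_{j,i+1} · (a_{i,i+1,m+p} + Σ_{q=i+2}^{n} Σ_{s∈ℤ} a_{iq,s} a*_{i+2,q,m+p−s}). In particular [ρ(F_i)_m, ρ(F_j)_p] = 0 whenever |i − j| ≠ 1. -/

import Mathlib

open MvPolynomial

/-- The Cartan matrix of `sl(n+1, ℂ)` in 1-based indices. -/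
noncomputable def cartanEntry (i j : ℕ) : ℂ :=
  if i = j then 2 else if i + 1 = j ∨ j + 1 = i then -1 else 0

/-- The entries of the matrix `𝔅` (1-based indices). -/
noncomputable def Bentry (r : ℕ) (γ : ℂ) (i j : ℕ) : ℂ :=
  cartanEntry i j *
    (γ ^ 2 - (if r < i then 1 else 0) * (if r < j then 1 else 0) * ((r : ℂ) + 1)
      + ((r : ℂ) / 2) * (if i = r + 1 then 1 else 0) * (if j = r + 1 then 1 else 0))

/-- Index set for the variables `x_{ij,m}`, `1 ≤ i ≤ j ≤ n`, `m ∈ ℤ`. -/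
abbrev XIdx (n : ℕ) : Type := {v : ℕ × ℕ // 1 ≤ v.1 ∧ v.1 ≤ v.2 ∧ v.2 ≤ n} × ℤ

/-- Index set for the variables `y_{k,m}`, `1 ≤ k ≤ n` (encoded by `Fin n`,
`k ↦ k + 1`) and `m ≥ 1`. -/
abbrev YIdx (n : ℕ) : Type := Fin n × {m : ℕ // 1 ≤ m}

/-- The Fock space `F = ℂ[x_{ij,m}; y_{k,m}]`. -/
abbrev FSp (n : ℕ) : Type := MvPolynomial (XIdx n ⊕ YIdx n) ℂ

/-- The operator `a_{ij,m}`: it is `∂/∂x_{ij,m}` if `m ≥ 0` and `j ≤ r`, and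
multiplication by `x_{ij,m}` otherwise (and junk `0` for invalid indices `i, j`,
which are never used).  Applied to any fixed polynomial, all the `∑ᶠ` sums
appearing below have finite support, so they compute the intended operators. -/
noncomputable def aop (n r i j : ℕ) (m : ℤ) : FSp n → FSp n :=
  if h : 1 ≤ i ∧ i ≤ j ∧ j ≤ n then
    (if 0 ≤ m ∧ j ≤ r then fun q => pderiv (Sum.inl (⟨(i, j), h⟩, m)) q
     else fun q => X (Sum.inl (⟨(i, j), h⟩, m)) * q)
  else 0

/-- The operator `a*_{ij,m}`: multiplication by `x_{ij,−m}` if `m ≤ 0` and `j ≤ r`,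
and `−∂/∂x_{ij,−m}` otherwise. -/
noncomputable def astarop (n r i j : ℕ) (m : ℤ) : FSp n → FSp n :=
  if h : 1 ≤ i ∧ i ≤ j ∧ j ≤ n then
    (if m ≤ 0 ∧ j ≤ r then fun q => X (Sum.inl (⟨(i, j), h⟩, -m)) * q
     else fun q => -pderiv (Sum.inl (⟨(i, j), h⟩, -m)) q)
  else 0

/-- The polynomial `e_i·𝐲_m = Σ_{k=1}^n (e_i)_k y_{k,m}`. -/
noncomputable def yPoly (n : ℕ) (e : ℕ → ℕ → ℂ) (i : ℕ) (m : {m : ℕ // 1 ≤ m}) :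
    FSp n :=
  ∑ k : Fin n, e i (k.1 + 1) • X (Sum.inr (k, m))

/-- The operator `b_{i,m}`:  `b_{i,0} = λ_i · id`; for `m > 0`, `b_{i,−m}` is
multiplication by `e_i·𝐲_m` and `b_{i,m} = m Σ_k (e_i)_k ∂/∂y_{k,m}`. -/
noncomputable def bop (n : ℕ) (e : ℕ → ℕ → ℂ) (lam : ℕ → ℂ) (i : ℕ) (m : ℤ) :
    FSp n → FSp n :=
  if h : 0 < m then
    fun q => (m : ℂ) • ∑ k : Fin n,
      e i (k.1 + 1) • pderiv (Sum.inr (k, ⟨m.toNat, by omega⟩)) q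
  else if h' : m = 0 then fun q => lam i • q
  else fun q => yPoly n e i ⟨(-m).toNat, by omega⟩ * q

/-- The normally ordered pair `:a_{ij,u} a*_{kl,v}:` : the annihilation operator
(`a_{ij,u}` with `u ≥ 0`, `j ≤ r`) is moved to the right of the creation operator. -/
noncomputable def nAA (n r i j k l : ℕ) (u v : ℤ) : FSp n → FSp n :=
  if 0 ≤ u ∧ j ≤ r then fun q => astarop n r k l v (aop n r i j u q)
  else fun q => aop n r i j u (astarop n r k l v q)

/-- Mode `m` (coefficient of `z^{−m−1}`) of the normally ordered product
`:a_{ij}(z) a*_{kl}(z):`. -/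
noncomputable def nAAmode (n r i j k l : ℕ) (m : ℤ) : FSp n → FSp n :=
  fun q => ∑ᶠ s : ℤ, nAA n r i j k l s (m - s) q

/-- Normal ordering of the mode `a*_{ij,s}` against an operator `B`: an
annihilating `a*_{ij,s}` (i.e. `s > 0` and `j ≤ r`, or `j > r`) is moved to the
right of `B`. -/
noncomputable def nStar (n r i j : ℕ) (s : ℤ) (B : FSp n → FSp n) : FSp n → FSp n :=
  if (j ≤ r ∧ 0 < s) ∨ r < j then fun q => B (astarop n r i j s q)
  else fun q => astarop n r i j s (B q)

/-- The intermediate Wakimoto mode operator `ρ(H_i)_m`. -/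
noncomputable def rhoH (n r : ℕ) (e : ℕ → ℕ → ℂ) (lam : ℕ → ℂ) (i : ℕ) (m : ℤ) :
    FSp n → FSp n :=
  fun q => (2 : ℂ) • nAAmode n r i i i i m q
    + ∑ j ∈ Finset.Ico 1 i,
        (nAAmode n r j i j i m q - nAAmode n r j (i - 1) j (i - 1) m q)
    + ∑ j ∈ Finset.Icc (i + 1) n,
        (nAAmode n r i j i j m q - nAAmode n r (i + 1) j (i + 1) j m q)
    + bop n e lam i m q

/-- The intermediate Wakimoto mode operator `ρ(F_i)_m`. -/
noncomputable def rhoF (n r i : ℕ) (m : ℤ) : FSp n → FSp n :=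
  fun q => aop n r i i m q
    + ∑ j ∈ Finset.Icc (i + 1) n,
        ∑ᶠ s : ℤ, aop n r i j s (astarop n r (i + 1) j (m - s) q)

/-- The intermediate Wakimoto mode operator `ρ(E_i)_m`. -/
noncomputable def rhoE (n r : ℕ) (γ : ℂ) (e : ℕ → ℕ → ℂ) (lam : ℕ → ℂ) (i : ℕ)
    (m : ℤ) : FSp n → FSp n :=
  fun q =>
    (∑ᶠ s : ℤ, nStar n r i i s
        ((∑ k ∈ Finset.Ico 1 i, nAAmode n r k (i - 1) k (i - 1) (m - s))
          - ∑ k ∈ Finset.Icc 1 i, nAAmode n r k i k i (m - s)) q)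
    + ∑ k ∈ Finset.Icc (i + 1) n,
        ∑ᶠ s : ℤ, aop n r (i + 1) k s (astarop n r i k (m - s) q)
    - ∑ k ∈ Finset.Ico 1 i,
        ∑ᶠ s : ℤ, aop n r k (i - 1) s (astarop n r k i (m - s) q)
    - ∑ᶠ s : ℤ, astarop n r i i s (bop n e lam i (m - s) q)
    - ((if r < i then (r : ℂ) + 1 else (i : ℂ) + 1) - γ ^ 2) •
        ((-(m : ℂ)) • astarop n r i i m q)

/-- Commutator of two operators. -/
noncomputable def opComm (n : ℕ) (A B : FSp n → FSp n) : FSp n → FSp n :=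
  fun q => A (B q) - B (A q)

lemma pderiv_comm' {σ : Type*} [DecidableEq σ] (i j : σ) (f : MvPolynomial σ ℂ) :
    pderiv i (pderiv j f) = pderiv j (pderiv i f) := by
  induction f using MvPolynomial.induction_on' with
  | add p q hp hq => simp [map_add, hp, hq]
  | monomial s a =>
    rcases eq_or_ne i j with rfl | hij
    · rfl
    · simp only [pderiv_monomial]
      have h1 : ((s - Finsupp.single j 1 : σ →₀ ℕ) : σ → ℕ) i = s i := by
        simp [Finsupp.tsub_apply, Finsupp.single_apply, if_neg (Ne.symm hij)]
      have h2 : ((s - Finsupp.single i 1 : σ →₀ ℕ) : σ → ℕ) j = s j := by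
        simp [Finsupp.tsub_apply, Finsupp.single_apply, if_neg (hij)]
      rw [show s - Finsupp.single j 1 - Finsupp.single i 1
            = s - Finsupp.single i 1 - Finsupp.single j 1 by
          ext x; simp only [Finsupp.tsub_apply]; omega]
      rw [h1, h2]; ring_nf

section OpLemmas
variable {n r : ℕ}

lemma aop_add (i j : ℕ) (u : ℤ) (q1 q2 : FSp n) :
    aop n r i j u (q1 + q2) = aop n r i j u q1 + aop n r i j u q2 := by
  unfold aop; split_ifs <;> simp [mul_add]

lemma aop_zero (i j : ℕ) (u : ℤ) : aop n r i j u 0 = 0 := by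
  unfold aop; split_ifs <;> simp

lemma astarop_add (i j : ℕ) (u : ℤ) (q1 q2 : FSp n) :
    astarop n r i j u (q1 + q2) = astarop n r i j u q1 + astarop n r i j u q2 := by
  unfold astarop; split_ifs <;> simp [mul_add]; ring

lemma astarop_zero (i j : ℕ) (u : ℤ) : astarop n r i j u 0 = 0 := by
  unfold astarop; split_ifs <;> simp

end OpLemmas

section CommLemmas
variable {n r : ℕ}

lemma aop_aop (i j k l : ℕ) (u v : ℤ) (q : FSp n) :
    aop n r i j u (aop n r k l v q) = aop n r k l v (aop n r i j u q) := by
  by_cases h1 : 1 ≤ i ∧ i ≤ j ∧ j ≤ n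
  · by_cases h2 : 1 ≤ k ∧ k ≤ l ∧ l ≤ n
    · unfold aop
      rw [dif_pos h1, dif_pos h2]
      split_ifs with c1 c2 c2 <;> beta_reduce
      · exact pderiv_comm' _ _ q
      · rw [pderiv_mul, pderiv_X_of_ne, zero_mul, zero_add]
        intro he
        simp only [Sum.inl.injEq, Prod.mk.injEq, Subtype.mk.injEq] at he
        obtain ⟨⟨e1, e2⟩, e3⟩ := he
        exact c2 ⟨by omega, by omega⟩
      · rw [pderiv_mul, pderiv_X_of_ne, zero_mul, zero_add]
        intro he
        simp only [Sum.inl.injEq, Prod.mk.injEq, Subtype.mk.injEq] at he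
        obtain ⟨⟨e1, e2⟩, e3⟩ := he
        exact c1 ⟨by omega, by omega⟩
      · ring
    · rw [show aop n r k l v = 0 from by unfold aop; rw [dif_neg h2]]
      simp [aop_zero]
  · rw [show aop n r i j u = 0 from by unfold aop; rw [dif_neg h1]]
    simp [aop_zero]

lemma astar_astar (i j k l : ℕ) (u v : ℤ) (q : FSp n) :
    astarop n r i j u (astarop n r k l v q) = astarop n r k l v (astarop n r i j u q) := by
  by_cases h1 : 1 ≤ i ∧ i ≤ j ∧ j ≤ n
  · by_cases h2 : 1 ≤ k ∧ k ≤ l ∧ l ≤ n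
    · unfold astarop
      rw [dif_pos h1, dif_pos h2]
      split_ifs with c1 c2 c2 <;> beta_reduce
      · ring
      · rw [pderiv_mul, pderiv_X_of_ne, zero_mul, zero_add]
        · ring
        intro he
        simp only [Sum.inl.injEq, Prod.mk.injEq, Subtype.mk.injEq] at he
        obtain ⟨⟨e1, e2⟩, e3⟩ := he
        exact c2 ⟨by omega, by omega⟩
      · rw [pderiv_mul, pderiv_X_of_ne, zero_mul, zero_add]
        · ring
        intro he
        simp only [Sum.inl.injEq, Prod.mk.injEq, Subtype.mk.injEq] at he
        obtain ⟨⟨e1, e2⟩, e3⟩ := he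
        exact c1 ⟨by omega, by omega⟩
      · rw [map_neg, map_neg, neg_neg, neg_neg]
        exact pderiv_comm' _ _ q
    · rw [show astarop n r k l v = 0 from by unfold astarop; rw [dif_neg h2]]
      simp [astarop_zero]
  · rw [show astarop n r i j u = 0 from by unfold astarop; rw [dif_neg h1]]
    simp [astarop_zero]

lemma aop_astar (i j k l : ℕ) (u v : ℤ) (q : FSp n) :
    aop n r i j u (astarop n r k l v q)
      = astarop n r k l v (aop n r i j u q)
        + if i = k ∧ j = l ∧ u + v = 0 ∧ 1 ≤ i ∧ i ≤ j ∧ j ≤ n then q else 0 := by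
  by_cases h1 : 1 ≤ i ∧ i ≤ j ∧ j ≤ n
  · by_cases h2 : 1 ≤ k ∧ k ≤ l ∧ l ≤ n
    · have hvar : (Sum.inl (⟨(i, j), h1⟩, u) : XIdx n ⊕ YIdx n) = Sum.inl (⟨(k, l), h2⟩, -v)
          ↔ (i = k ∧ j = l ∧ u + v = 0 ∧ 1 ≤ i ∧ i ≤ j ∧ j ≤ n) := by
        simp only [Sum.inl.injEq, Prod.mk.injEq, Subtype.mk.injEq]
        constructor
        · rintro ⟨⟨e1, e2⟩, e3⟩; exact ⟨e1, e2, by omega, h1⟩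
        · rintro ⟨e1, e2, e3, -⟩; exact ⟨⟨e1, e2⟩, by omega⟩
      unfold aop astarop
      rw [dif_pos h1, dif_pos h2]
      by_cases hd : i = k ∧ j = l ∧ u + v = 0 ∧ 1 ≤ i ∧ i ≤ j ∧ j ≤ n
      · rw [if_pos hd]
        have hv := hvar.mpr hd
        obtain ⟨e1, e2, e3, -⟩ := hd
        have hjr : j = l := e2
        split_ifs with c1 c2 c2 <;> beta_reduce
        · rw [← hv, pderiv_mul, pderiv_X_self, one_mul]; ring
        · exact absurd ⟨show v ≤ 0 by omega, show l ≤ r from hjr ▸ c1.2⟩ c2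
        · exact absurd ⟨show (0:ℤ) ≤ u by omega, show j ≤ r from hjr ▸ c2.2⟩ c1
        · rw [← hv, pderiv_mul, pderiv_X_self, one_mul]; ring
      · rw [if_neg hd, add_zero]
        have hv : (Sum.inl (⟨(i, j), h1⟩, u) : XIdx n ⊕ YIdx n) ≠ Sum.inl (⟨(k, l), h2⟩, -v) :=
          fun h => hd (hvar.mp h)
        split_ifs with c1 c2 c2 <;> beta_reduce
        · rw [pderiv_mul, pderiv_X_of_ne (fun h => hv h.symm), zero_mul, zero_add]
        · rw [map_neg, pderiv_comm' _ _ q]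
        · ring
        · rw [pderiv_mul, pderiv_X_of_ne hv, zero_mul, zero_add]
          ring
    · rw [show astarop n r k l v = 0 from by unfold astarop; rw [dif_neg h2]]
      rw [if_neg (by rintro ⟨e1, e2, -, f1, f2, f3⟩; exact h2 ⟨by omega, by omega, by omega⟩)]
      simp [aop_zero]
  · rw [show aop n r i j u = 0 from by unfold aop; rw [dif_neg h1]]
    rw [if_neg (by rintro ⟨-, -, -, h⟩; exact h1 h)]
    simp [astarop_zero]

end CommLemmas

section Supp
variable {n r : ℕ}

lemma supp_comp_finite {ι : Type*} {A : FSp n → FSp n} (hA : A 0 = 0) {f : ι → FSp n}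
    (hf : (Function.support f).Finite) : (Function.support fun s => A (f s)).Finite := by
  refine hf.subset fun s hs => ?_
  simp only [Function.mem_support] at hs ⊢
  intro h0
  exact hs (by rw [h0, hA])

lemma fs (i i' k : ℕ) (hii' : i ≠ i') (c : ℤ) (q : FSp n) :
    (Function.support fun s => aop n r i k s (astarop n r i' k (c - s) q)).Finite := by
  by_cases h1 : 1 ≤ i ∧ i ≤ k ∧ k ≤ n
  swap
  · rw [show (fun s => aop n r i k s (astarop n r i' k (c - s) q)) = fun _ => 0 from
      funext fun s => by rw [show aop n r i k s = 0 from by unfold aop; rw [dif_neg h1]]; rfl]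
    simp
  by_cases h2 : 1 ≤ i' ∧ i' ≤ k ∧ k ≤ n
  swap
  · rw [show (fun s => aop n r i k s (astarop n r i' k (c - s) q)) = fun _ => 0 from
      funext fun s => by
        rw [show astarop n r i' k (c - s) = 0 from by unfold astarop; rw [dif_neg h2]]
        exact aop_zero i k s]
    simp
  have inj1 : Function.Injective
      (fun s : ℤ => (Sum.inl (⟨(i, k), h1⟩, s) : XIdx n ⊕ YIdx n)) := by
    intro a b hab
    have := congrArg (fun x => match x with | Sum.inl p => p.2 | Sum.inr _ => (0:ℤ)) hab
    simpa using this
  have inj2 : Function.Injective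
      (fun s : ℤ => (Sum.inl (⟨(i', k), h2⟩, s - c) : XIdx n ⊕ YIdx n)) := by
    intro a b hab
    have := congrArg (fun x => match x with | Sum.inl p => p.2 | Sum.inr _ => (0:ℤ)) hab
    simp only at this
    omega
  have hfin : (Set.Icc (min c 0) (max c 0) ∪
      ((fun s : ℤ => (Sum.inl (⟨(i, k), h1⟩, s) : XIdx n ⊕ YIdx n)) ⁻¹' (q.vars : Set _)) ∪
      ((fun s : ℤ => (Sum.inl (⟨(i', k), h2⟩, s - c) : XIdx n ⊕ YIdx n)) ⁻¹' (q.vars : Set _))).Finite :=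
    ((Set.finite_Icc _ _).union (Set.Finite.preimage inj1.injOn q.vars.finite_toSet)).union
      (Set.Finite.preimage inj2.injOn q.vars.finite_toSet)
  refine hfin.subset fun s hs => ?_
  simp only [Function.mem_support] at hs
  by_contra hS
  simp only [Set.mem_union, Set.mem_Icc, Set.mem_preimage, Finset.mem_coe, not_or] at hS
  obtain ⟨⟨hIcc, hv1⟩, hv2⟩ := hS
  apply hs
  unfold aop astarop
  rw [dif_pos h1, dif_pos h2]
  rcases lt_or_ge s 0 with hs0 | hs0
  · have hsc : s < c := by omega
    rw [if_neg (by omega), if_neg (by rintro ⟨h, -⟩; omega)]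
    beta_reduce
    rw [show -(c - s) = s - c by ring, pderiv_eq_zero_of_notMem_vars hv2, neg_zero, mul_zero]
  · have hsc : c < s := by omega
    by_cases hkr : k ≤ r
    · rw [if_pos ⟨hs0, hkr⟩, if_pos ⟨by omega, hkr⟩]
      beta_reduce
      rw [pderiv_mul, pderiv_X_of_ne, pderiv_eq_zero_of_notMem_vars hv1, zero_mul, mul_zero,
        add_zero]
      intro hab
      have := congrArg (fun x => match x with
        | Sum.inl p => p.1.1.1 | Sum.inr _ => (0:ℕ)) hab
      simp only at this
      exact hii' this.symm
    · rw [if_neg (by rintro ⟨-, h⟩; exact hkr h), if_neg (by rintro ⟨-, h⟩; exact hkr h)]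
      beta_reduce
      rw [show -(c - s) = s - c by ring, pderiv_eq_zero_of_notMem_vars hv2, neg_zero, mul_zero]

end Supp

section GopSec
variable {n r : ℕ}

/-- `G^{(i,k)}_m = ∑ᶠ s, a_{ik,s} a*_{i+1,k,m-s}` as an operator. -/
noncomputable def Gop (n r i k : ℕ) (m : ℤ) : FSp n → FSp n :=
  fun q => ∑ᶠ s : ℤ, aop n r i k s (astarop n r (i + 1) k (m - s) q)

lemma fsG (i k : ℕ) (m : ℤ) (q : FSp n) :
    (Function.support fun s => aop n r i k s (astarop n r (i + 1) k (m - s) q)).Finite :=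
  fs i (i + 1) k (by omega) m q

/-- `aop` as an additive hom. -/
noncomputable def aHom (n r i j : ℕ) (u : ℤ) : FSp n →+ FSp n :=
  AddMonoidHom.mk' (aop n r i j u) (aop_add i j u)

noncomputable def astarHom (n r i j : ℕ) (u : ℤ) : FSp n →+ FSp n :=
  AddMonoidHom.mk' (astarop n r i j u) (astarop_add i j u)

lemma aop_finsum {ι : Type*} (i j : ℕ) (u : ℤ) (f : ι → FSp n)
    (hf : (Function.support f).Finite) :
    aop n r i j u (∑ᶠ x, f x) = ∑ᶠ x, aop n r i j u (f x) :=
  (aHom n r i j u).map_finsum hf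

lemma astarop_finsum {ι : Type*} (i j : ℕ) (u : ℤ) (f : ι → FSp n)
    (hf : (Function.support f).Finite) :
    astarop n r i j u (∑ᶠ x, f x) = ∑ᶠ x, astarop n r i j u (f x) :=
  (astarHom n r i j u).map_finsum hf

lemma Gop_zero (i k : ℕ) (m : ℤ) : Gop n r i k m (0 : FSp n) = 0 := by
  unfold Gop
  rw [show (fun s : ℤ => aop n r i k s (astarop n r (i + 1) k (m - s) (0 : FSp n)))
      = fun _ => 0 from funext fun s => by rw [astarop_zero, aop_zero]]
  exact finsum_zero

lemma Gop_add (i k : ℕ) (m : ℤ) (q1 q2 : FSp n) :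
    Gop n r i k m (q1 + q2) = Gop n r i k m q1 + Gop n r i k m q2 := by
  unfold Gop
  rw [show (fun s : ℤ => aop n r i k s (astarop n r (i + 1) k (m - s) (q1 + q2)))
      = fun s => aop n r i k s (astarop n r (i + 1) k (m - s) q1)
          + aop n r i k s (astarop n r (i + 1) k (m - s) q2) from
    funext fun s => by rw [astarop_add, aop_add]]
  exact finsum_add_distrib (fsG i k m q1) (fsG i k m q2)

noncomputable def GHom (n r i k : ℕ) (m : ℤ) : FSp n →+ FSp n :=
  AddMonoidHom.mk' (Gop n r i k m) (Gop_add i k m)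

lemma aop_G (α β : ℕ) (u : ℤ) (j l : ℕ) (p : ℤ) (w : FSp n) :
    aop n r α β u (Gop n r j l p w)
      = Gop n r j l p (aop n r α β u w)
        + if α = j + 1 ∧ β = l ∧ 1 ≤ α ∧ α ≤ β ∧ β ≤ n then aop n r j l (u + p) w
          else 0 := by
  unfold Gop
  rw [aop_finsum _ _ _ _ (fsG j l p w)]
  have step : ∀ s : ℤ,
      aop n r α β u (aop n r j l s (astarop n r (j + 1) l (p - s) w))
        = aop n r j l s (astarop n r (j + 1) l (p - s) (aop n r α β u w))
          + aop n r j l s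
              (if α = j + 1 ∧ β = l ∧ u + (p - s) = 0 ∧ 1 ≤ α ∧ α ≤ β ∧ β ≤ n then w
               else 0) := by
    intro s
    rw [aop_aop, aop_astar, aop_add]
  rw [show (fun s : ℤ => aop n r α β u (aop n r j l s (astarop n r (j + 1) l (p - s) w)))
      = _ from funext step]
  rw [finsum_add_distrib (fsG j l p (aop n r α β u w)) ?hfin]
  case hfin =>
    refine Set.Finite.subset (Set.finite_singleton (u + p)) fun s hs => ?_
    simp only [Function.mem_support] at hs
    by_contra hne
    simp only [Set.mem_singleton_iff] at hne
    exact hs (by rw [if_neg (by rintro ⟨-, -, h, -⟩; omega), aop_zero])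
  congr 1
  rw [finsum_eq_single _ (u + p)
    (fun s hs => by rw [if_neg (by rintro ⟨-, -, h, -⟩; omega), aop_zero])]
  rw [show u + (p - (u + p)) = 0 by ring]
  by_cases hc : α = j + 1 ∧ β = l ∧ 1 ≤ α ∧ α ≤ β ∧ β ≤ n
  · rw [if_pos ⟨hc.1, hc.2.1, rfl, hc.2.2⟩, if_pos hc]
  · rw [if_neg (by rintro ⟨a, b, -, c⟩; exact hc ⟨a, b, c⟩), if_neg hc, aop_zero]

lemma astar_G (α β : ℕ) (u : ℤ) (j l : ℕ) (p : ℤ)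
    (hj : 1 ≤ j) (hjl : j ≤ l) (hln : l ≤ n) (w : FSp n) :
    astarop n r α β u (Gop n r j l p w)
      = Gop n r j l p (astarop n r α β u w)
        - (if j = α ∧ l = β then astarop n r (j + 1) l (p + u) w else 0) := by
  unfold Gop
  rw [astarop_finsum _ _ _ _ (fsG j l p w)]
  have step : ∀ s : ℤ,
      astarop n r α β u (aop n r j l s (astarop n r (j + 1) l (p - s) w))
        = aop n r j l s (astarop n r (j + 1) l (p - s) (astarop n r α β u w))
          - (if j = α ∧ l = β ∧ s + u = 0 ∧ 1 ≤ j ∧ j ≤ l ∧ l ≤ n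
             then astarop n r (j + 1) l (p - s) w else 0) := by
    intro s
    have h := aop_astar (n := n) (r := r) j l α β s u (astarop n r (j + 1) l (p - s) w)
    rw [astar_astar] at h
    rw [eq_sub_iff_add_eq, ← h]
  rw [show (fun s : ℤ => astarop n r α β u (aop n r j l s (astarop n r (j + 1) l (p - s) w)))
      = _ from funext step]
  rw [finsum_sub_distrib (fsG j l p (astarop n r α β u w)) ?hfin]
  case hfin =>
    refine Set.Finite.subset (Set.finite_singleton (-u)) fun s hs => ?_
    simp only [Function.mem_support] at hs
    by_contra hne
    simp only [Set.mem_singleton_iff] at hne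
    exact hs (by rw [if_neg (by rintro ⟨-, -, h, -⟩; omega)])
  congr 1
  rw [finsum_eq_single _ (-u)
    (fun s hs => by rw [if_neg (by rintro ⟨-, -, h, -⟩; omega)])]
  rw [show p - -u = p + u by ring]
  by_cases hc : j = α ∧ l = β
  · rw [if_pos ⟨hc.1, hc.2, by ring, hj, hjl, hln⟩, if_pos hc]
  · rw [if_neg (by rintro ⟨a, b, -⟩; exact hc ⟨a, b⟩), if_neg hc]

end GopSec

section GG
variable {n r : ℕ}

lemma aop_sub (i j : ℕ) (u : ℤ) (q1 q2 : FSp n) :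
    aop n r i j u (q1 - q2) = aop n r i j u q1 - aop n r i j u q2 :=
  (aHom n r i j u).map_sub q1 q2

lemma Gop_finsum (j l : ℕ) (p : ℤ) {ι : Type*} (f : ι → FSp n)
    (hf : (Function.support f).Finite) :
    Gop n r j l p (∑ᶠ x, f x) = ∑ᶠ x, Gop n r j l p (f x) :=
  (GHom n r j l p).map_finsum hf

lemma support_sub_finite {f g : ℤ → FSp n} (hf : (Function.support f).Finite)
    (hg : (Function.support g).Finite) :
    (Function.support fun s => f s - g s).Finite := by
  refine (hf.union hg).subset fun s hs => ?_
  simp only [Function.mem_support, Set.mem_union] at hs ⊢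
  by_contra h
  push_neg at h
  exact hs (by rw [h.1, h.2, sub_zero])

lemma comm_G_G (i k j l : ℕ) (m p : ℤ) (hi : 1 ≤ i) (hik : i + 1 ≤ k) (hkn : k ≤ n)
    (hj : 1 ≤ j) (hjl : j + 1 ≤ l) (hln : l ≤ n) (w : FSp n) :
    Gop n r i k m (Gop n r j l p w) - Gop n r j l p (Gop n r i k m w)
      = (if i = j + 1 ∧ k = l
          then ∑ᶠ s : ℤ, aop n r j l s (astarop n r (j + 2) l (m + p - s) w) else 0)
        - (if j = i + 1 ∧ k = l
          then ∑ᶠ s : ℤ, aop n r i k s (astarop n r (i + 2) k (m + p - s) w) else 0) := by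
  have step : ∀ s : ℤ,
      aop n r i k s (astarop n r (i + 1) k (m - s) (Gop n r j l p w))
        = Gop n r j l p (aop n r i k s (astarop n r (i + 1) k (m - s) w))
          + ((if i = j + 1 ∧ k = l
              then aop n r j l (s + p) (astarop n r (i + 1) k (m - s) w) else 0)
            - (if j = i + 1 ∧ l = k
              then aop n r i k s (astarop n r (j + 1) l (p + (m - s)) w) else 0)) := by
    intro s
    rw [astar_G (i + 1) k (m - s) j l p hj (by omega) hln w, aop_sub, aop_G]
    have e1 : (if i = j + 1 ∧ k = l ∧ 1 ≤ i ∧ i ≤ k ∧ k ≤ n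
        then aop n r j l (s + p) (astarop n r (i + 1) k (m - s) w) else 0)
        = (if i = j + 1 ∧ k = l
            then aop n r j l (s + p) (astarop n r (i + 1) k (m - s) w) else 0) := by
      refine if_congr ?_ rfl rfl
      constructor
      · rintro ⟨a, b, -⟩; exact ⟨a, b⟩
      · rintro ⟨a, b⟩; exact ⟨a, b, hi, by omega, hkn⟩
    have e2 : aop n r i k s
          (if j = i + 1 ∧ l = k then astarop n r (j + 1) l (p + (m - s)) w else 0)
        = (if j = i + 1 ∧ l = k
            then aop n r i k s (astarop n r (j + 1) l (p + (m - s)) w) else 0) := by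
      split_ifs with h
      · rfl
      · exact aop_zero i k s
    rw [e1, e2]
    abel
  have supp0 : (Function.support fun s : ℤ =>
      Gop n r j l p (aop n r i k s (astarop n r (i + 1) k (m - s) w))).Finite :=
    supp_comp_finite (Gop_zero j l p) (fsG i k m w)
  have supp1 : (Function.support fun s : ℤ =>
      (if i = j + 1 ∧ k = l
        then aop n r j l (s + p) (astarop n r (i + 1) k (m - s) w) else 0)).Finite := by
    by_cases hc : i = j + 1 ∧ k = l
    · simp only [if_pos hc]
      obtain ⟨hc1, hc2⟩ := hc
      subst hc1 hc2
      rw [show (fun s : ℤ => aop n r j k (s + p) (astarop n r (j + 1 + 1) k (m - s) w))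
          = (fun s : ℤ => aop n r j k s (astarop n r (j + 1 + 1) k (m + p - s) w))
              ∘ (fun s : ℤ => s + p) from
        funext fun s => by
          simp only [Function.comp_apply]
          rw [show m + p - (s + p) = m - s by ring]]
      rw [Function.support_comp_eq_preimage]
      exact Set.Finite.preimage (fun a _ b _ hab => by omega)
        (fs (n := n) (r := r) j (j + 1 + 1) k (by omega) (m + p) w)
    · simp only [if_neg hc, Function.support_zero, Function.support_fun_zero, Set.finite_empty]
  have supp2 : (Function.support fun s : ℤ =>
      (if j = i + 1 ∧ l = k
        then aop n r i k s (astarop n r (j + 1) l (p + (m - s)) w) else 0)).Finite := by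
    by_cases hc : j = i + 1 ∧ l = k
    · simp only [if_pos hc]
      obtain ⟨hc1, hc2⟩ := hc
      subst hc1 hc2
      refine (fs (n := n) (r := r) i (i + 1 + 1) l (by omega) (p + m) w).subset fun s hs => ?_
      simp only [Function.mem_support] at hs ⊢
      rw [show p + m - s = p + (m - s) by ring]
      exact hs
    · simp only [if_neg hc, Function.support_zero, Function.support_fun_zero, Set.finite_empty]
  have lhs1 : Gop n r i k m (Gop n r j l p w)
      = Gop n r j l p (Gop n r i k m w)
        + ((if i = j + 1 ∧ k = l
            then ∑ᶠ s : ℤ, aop n r j l (s + p) (astarop n r (i + 1) k (m - s) w) else 0)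
          - (if j = i + 1 ∧ l = k
            then ∑ᶠ s : ℤ, aop n r i k s (astarop n r (j + 1) l (p + (m - s)) w) else 0)) := by
    rw [show Gop n r i k m (Gop n r j l p w)
        = ∑ᶠ s : ℤ, aop n r i k s (astarop n r (i + 1) k (m - s) (Gop n r j l p w)) from rfl]
    rw [show (fun s : ℤ => aop n r i k s (astarop n r (i + 1) k (m - s) (Gop n r j l p w)))
        = _ from funext step]
    rw [finsum_add_distrib supp0 (support_sub_finite supp1 supp2)]
    rw [finsum_sub_distrib supp1 supp2]
    congr 1
    · rw [← Gop_finsum j l p _ (fsG i k m w)]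
      rfl
    congr 1
    · by_cases hc : i = j + 1 ∧ k = l
      · simp only [if_pos hc]
      · simp only [if_neg hc]
        exact finsum_zero
    · by_cases hc : j = i + 1 ∧ l = k
      · simp only [if_pos hc]
      · simp only [if_neg hc]
        exact finsum_zero
  rw [lhs1]
  have eA : (if i = j + 1 ∧ k = l
        then ∑ᶠ s : ℤ, aop n r j l (s + p) (astarop n r (i + 1) k (m - s) w) else 0)
      = (if i = j + 1 ∧ k = l
        then ∑ᶠ s : ℤ, aop n r j l s (astarop n r (j + 2) l (m + p - s) w) else 0) := by
    by_cases hc : i = j + 1 ∧ k = l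
    · rw [if_pos hc, if_pos hc]
      obtain ⟨hc1, hc2⟩ := hc
      subst hc1 hc2
      have heq := finsum_comp_equiv (Equiv.addRight p)
        (f := fun t : ℤ => aop n r j k t (astarop n r (j + 1 + 1) k (m + p - t) w))
      refine Eq.trans ?_ (heq.trans ?_)
      · refine finsum_congr fun s => ?_
        simp only [Equiv.coe_addRight]
        rw [show m + p - (s + p) = m - s by ring]
      · exact finsum_congr fun t => rfl
    · rw [if_neg hc, if_neg hc]
  have eB : (if j = i + 1 ∧ l = k
        then ∑ᶠ s : ℤ, aop n r i k s (astarop n r (j + 1) l (p + (m - s)) w) else 0)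
      = (if j = i + 1 ∧ k = l
        then ∑ᶠ s : ℤ, aop n r i k s (astarop n r (i + 2) k (m + p - s) w) else 0) := by
    by_cases hc : j = i + 1 ∧ l = k
    · rw [if_pos hc, if_pos (⟨hc.1, hc.2.symm⟩ : j = i + 1 ∧ k = l)]
      obtain ⟨hc1, hc2⟩ := hc
      subst hc1 hc2
      refine finsum_congr fun s => ?_
      rw [show p + (m - s) = m + p - s by ring]
    · rw [if_neg hc, if_neg (by rintro ⟨a, b⟩; exact hc ⟨a, b.symm⟩)]
  rw [eA, eB]
  abel

end GG

section Assemble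
variable {n r : ℕ}

lemma aop_sum {ι : Type*} (i j : ℕ) (u : ℤ) (s : Finset ι) (f : ι → FSp n) :
    aop n r i j u (∑ x ∈ s, f x) = ∑ x ∈ s, aop n r i j u (f x) :=
  map_sum (aHom n r i j u) f s

lemma Gop_sum {ι : Type*} (i k : ℕ) (m : ℤ) (s : Finset ι) (f : ι → FSp n) :
    Gop n r i k m (∑ x ∈ s, f x) = ∑ x ∈ s, Gop n r i k m (f x) :=
  map_sum (GHom n r i k m) f s

/-- Collapse of `∑_l [a_{ii,m}, H_l]`. -/
lemma collapse_AH (i j : ℕ) (m p : ℤ) (hi : 1 ≤ i) (hi' : i ≤ n) (w : FSp n) :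
    (∑ l ∈ Finset.Icc (j + 1) n,
        (aop n r i i m (Gop n r j l p w) - Gop n r j l p (aop n r i i m w)))
      = if i = j + 1 then aop n r j (j + 1) (m + p) w else 0 := by
  have hterm : ∀ l, aop n r i i m (Gop n r j l p w) - Gop n r j l p (aop n r i i m w)
      = if i = j + 1 ∧ i = l ∧ 1 ≤ i ∧ i ≤ i ∧ i ≤ n then aop n r j l (m + p) w
        else 0 := by
    intro l
    rw [aop_G]
    abel
  by_cases hij : i = j + 1
  · have hterm2 : ∀ l, aop n r i i m (Gop n r j l p w) - Gop n r j l p (aop n r i i m w)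
        = if l = i then aop n r j l (m + p) w else 0 := by
      intro l
      rw [hterm l]
      by_cases hl : l = i
      · rw [if_pos hl, if_pos ⟨hij, hl.symm, hi, le_refl i, hi'⟩]
      · rw [if_neg hl, if_neg (by rintro ⟨-, h, -⟩; exact hl h.symm)]
    rw [Finset.sum_congr rfl fun l _ => hterm2 l]
    rw [Finset.sum_ite_eq' (Finset.Icc (j + 1) n) i (fun l => aop n r j l (m + p) w)]
    rw [if_pos (Finset.mem_Icc.2 ⟨by omega, hi'⟩), if_pos hij, hij]
  · rw [Finset.sum_congr rfl fun l _ => (hterm l).trans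
      (if_neg (by rintro ⟨h, -⟩; exact hij h))]
    rw [Finset.sum_const_zero, if_neg hij]

/-- Collapse of `∑_k [G_k, a_{jj,p}]`. -/
lemma collapse_GB (i j : ℕ) (m p : ℤ) (hj : 1 ≤ j) (hj' : j ≤ n) (w : FSp n) :
    (∑ k ∈ Finset.Icc (i + 1) n,
        (Gop n r i k m (aop n r j j p w) - aop n r j j p (Gop n r i k m w)))
      = -(if j = i + 1 then aop n r i (i + 1) (m + p) w else 0) := by
  have hterm : ∀ k, Gop n r i k m (aop n r j j p w) - aop n r j j p (Gop n r i k m w)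
      = -(if j = i + 1 ∧ j = k ∧ 1 ≤ j ∧ j ≤ j ∧ j ≤ n then aop n r i k (p + m) w
          else 0) := by
    intro k
    rw [aop_G]
    abel
  by_cases hji : j = i + 1
  · have hterm2 : ∀ k, Gop n r i k m (aop n r j j p w) - aop n r j j p (Gop n r i k m w)
        = -(if k = j then aop n r i k (p + m) w else 0) := by
      intro k
      rw [hterm k]
      by_cases hk : k = j
      · rw [if_pos hk, if_pos ⟨hji, hk.symm, hj, le_refl j, hj'⟩]
      · rw [if_neg hk, if_neg (by rintro ⟨-, h, -⟩; exact hk h.symm)]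
    rw [Finset.sum_congr rfl fun k _ => hterm2 k, Finset.sum_neg_distrib, neg_inj]
    rw [Finset.sum_ite_eq' (Finset.Icc (i + 1) n) j (fun k => aop n r i k (p + m) w)]
    rw [if_pos (Finset.mem_Icc.2 ⟨by omega, by omega⟩), if_pos hji, hji,
      show p + m = m + p by ring]
  · rw [Finset.sum_congr rfl fun k _ => (hterm k).trans (by
      rw [if_neg (by rintro ⟨h, -⟩; exact hji h), neg_zero])]
    rw [Finset.sum_const_zero, if_neg hji, neg_zero]

/-- Collapse of `∑_k ∑_l [G_k, H_l]`. -/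
lemma collapse_GG (i j : ℕ) (m p : ℤ) (hi : 1 ≤ i) (hi' : i ≤ n) (hj : 1 ≤ j)
    (hj' : j ≤ n) (w : FSp n) :
    (∑ k ∈ Finset.Icc (i + 1) n, ∑ l ∈ Finset.Icc (j + 1) n,
        (Gop n r i k m (Gop n r j l p w) - Gop n r j l p (Gop n r i k m w)))
      = (if i = j + 1 then ∑ q ∈ Finset.Icc (j + 2) n,
            ∑ᶠ s : ℤ, aop n r j q s (astarop n r (j + 2) q (m + p - s) w) else 0)
        - (if j = i + 1 then ∑ q ∈ Finset.Icc (i + 2) n,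
            ∑ᶠ s : ℤ, aop n r i q s (astarop n r (i + 2) q (m + p - s) w) else 0) := by
  rw [Finset.sum_congr rfl fun k hk => Finset.sum_congr rfl fun l hl =>
    comm_G_G i k j l m p hi (Finset.mem_Icc.1 hk).1 (Finset.mem_Icc.1 hk).2
      hj (Finset.mem_Icc.1 hl).1 (Finset.mem_Icc.1 hl).2 w]
  simp only [Finset.sum_sub_distrib]
  congr 1
  · by_cases hij : i = j + 1
    · rw [if_pos hij]
      have h1 : ∀ k, (∑ l ∈ Finset.Icc (j + 1) n,
          if i = j + 1 ∧ k = l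
            then ∑ᶠ s : ℤ, aop n r j l s (astarop n r (j + 2) l (m + p - s) w) else 0)
          = if k ∈ Finset.Icc (j + 1) n
              then ∑ᶠ s : ℤ, aop n r j k s (astarop n r (j + 2) k (m + p - s) w)
              else 0 := by
        intro k
        rw [Finset.sum_congr rfl fun l _ => show
            (if i = j + 1 ∧ k = l
              then ∑ᶠ s : ℤ, aop n r j l s (astarop n r (j + 2) l (m + p - s) w) else 0)
            = if l = k
              then ∑ᶠ s : ℤ, aop n r j l s (astarop n r (j + 2) l (m + p - s) w) else 0 from by
          by_cases hl : l = k
          · rw [if_pos hl, if_pos ⟨hij, hl.symm⟩]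
          · rw [if_neg hl, if_neg (by rintro ⟨-, h⟩; exact hl h.symm)]]
        exact Finset.sum_ite_eq' (Finset.Icc (j + 1) n) k _
      rw [Finset.sum_congr rfl fun k _ => h1 k, Finset.sum_ite_mem]
      refine Finset.sum_congr ?_ fun k _ => rfl
      ext x
      simp only [Finset.mem_inter, Finset.mem_Icc]
      omega
    · rw [if_neg hij]
      rw [Finset.sum_congr rfl fun k _ => Finset.sum_congr rfl fun l _ =>
        if_neg (by rintro ⟨h, -⟩; exact hij h)]
      simp
  · by_cases hji : j = i + 1
    · rw [if_pos hji]
      have h1 : ∀ k, (∑ l ∈ Finset.Icc (j + 1) n,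
          if j = i + 1 ∧ k = l
            then ∑ᶠ s : ℤ, aop n r i k s (astarop n r (i + 2) k (m + p - s) w) else 0)
          = if k ∈ Finset.Icc (j + 1) n
              then ∑ᶠ s : ℤ, aop n r i k s (astarop n r (i + 2) k (m + p - s) w)
              else 0 := by
        intro k
        rw [Finset.sum_congr rfl fun l _ => show
            (if j = i + 1 ∧ k = l
              then ∑ᶠ s : ℤ, aop n r i k s (astarop n r (i + 2) k (m + p - s) w) else 0)
            = if l = k
              then ∑ᶠ s : ℤ, aop n r i k s (astarop n r (i + 2) k (m + p - s) w) else 0 from by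
          by_cases hl : l = k
          · rw [if_pos hl, if_pos ⟨hji, hl.symm⟩]
          · rw [if_neg hl, if_neg (by rintro ⟨-, h⟩; exact hl h.symm)]]
        exact Finset.sum_ite_eq' (Finset.Icc (j + 1) n) k _
      rw [Finset.sum_congr rfl fun k _ => h1 k, Finset.sum_ite_mem]
      refine Finset.sum_congr ?_ fun k _ => rfl
      ext x
      simp only [Finset.mem_inter, Finset.mem_Icc]
      omega
    · rw [if_neg hji]
      rw [Finset.sum_congr rfl fun k _ => Finset.sum_congr rfl fun l _ =>
        if_neg (by rintro ⟨h, -⟩; exact hji h)]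
      simp

end Assemble

/-- the explicit commutator of the lowering operators:
`[ρ(F_i)_m, ρ(F_j)_p] = δ_{i,j+1}(a_{j,j+1,m+p} + Σ_{q=j+2}^n Σ_s a_{jq,s}a*_{j+2,q,m+p−s})
 − δ_{j,i+1}(a_{i,i+1,m+p} + Σ_{q=i+2}^n Σ_s a_{iq,s}a*_{i+2,q,m+p−s})`;
in particular it vanishes when `|i − j| ≠ 1`. -/
theorem wakimoto_FF_commutator (n r : ℕ) (γ : ℂ) (e : ℕ → ℕ → ℂ) (lam : ℕ → ℂ)
    (hn : 1 ≤ n) (hr : r ≤ n)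
    (he : ∀ i j, 1 ≤ i → i ≤ n → 1 ≤ j → j ≤ n →
      (∑ k : Fin n, e i (k.1 + 1) * e j (k.1 + 1)) = Bentry r γ i j)
    (i j : ℕ) (hi : 1 ≤ i) (hi' : i ≤ n) (hj : 1 ≤ j) (hj' : j ≤ n) (m p : ℤ) :
    (opComm n (rhoF n r i m) (rhoF n r j p) = fun w =>
      (if i = j + 1 then (1 : ℂ) else 0) •
        (aop n r j (j + 1) (m + p) w +
          ∑ q ∈ Finset.Icc (j + 2) n,
            ∑ᶠ s : ℤ, aop n r j q s (astarop n r (j + 2) q (m + p - s) w))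
      - (if j = i + 1 then (1 : ℂ) else 0) •
        (aop n r i (i + 1) (m + p) w +
          ∑ q ∈ Finset.Icc (i + 2) n,
            ∑ᶠ s : ℤ, aop n r i q s (astarop n r (i + 2) q (m + p - s) w))) ∧
    (¬(i = j + 1 ∨ j = i + 1) → opComm n (rhoF n r i m) (rhoF n r j p) = 0) := by
  have key : opComm n (rhoF n r i m) (rhoF n r j p) = fun w =>
      (if i = j + 1 then (1 : ℂ) else 0) •
        (aop n r j (j + 1) (m + p) w +
          ∑ q ∈ Finset.Icc (j + 2) n,
            ∑ᶠ s : ℤ, aop n r j q s (astarop n r (j + 2) q (m + p - s) w))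
      - (if j = i + 1 then (1 : ℂ) else 0) •
        (aop n r i (i + 1) (m + p) w +
          ∑ q ∈ Finset.Icc (i + 2) n,
            ∑ᶠ s : ℤ, aop n r i q s (astarop n r (i + 2) q (m + p - s) w)) := by
    funext w
    show rhoF n r i m (rhoF n r j p w) - rhoF n r j p (rhoF n r i m w) = _
    have hrho : ∀ (a : ℕ) (c : ℤ) (q : FSp n),
        rhoF n r a c q = aop n r a a c q + ∑ k ∈ Finset.Icc (a + 1) n, Gop n r a k c q :=
      fun _ _ _ => rfl
    rw [hrho i m (rhoF n r j p w), hrho j p (rhoF n r i m w), hrho j p w, hrho i m w]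
    simp only [aop_add, Gop_add, aop_sum, Gop_sum]
    have grouped :
        (aop n r i i m (aop n r j j p w)
            + ∑ l ∈ Finset.Icc (j + 1) n, aop n r i i m (Gop n r j l p w))
          + ∑ k ∈ Finset.Icc (i + 1) n,
              (Gop n r i k m (aop n r j j p w)
                + ∑ l ∈ Finset.Icc (j + 1) n, Gop n r i k m (Gop n r j l p w))
          - ((aop n r j j p (aop n r i i m w)
              + ∑ k ∈ Finset.Icc (i + 1) n, aop n r j j p (Gop n r i k m w))
            + ∑ l ∈ Finset.Icc (j + 1) n,
                (Gop n r j l p (aop n r i i m w)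
                  + ∑ k ∈ Finset.Icc (i + 1) n, Gop n r j l p (Gop n r i k m w)))
        = (aop n r i i m (aop n r j j p w) - aop n r j j p (aop n r i i m w))
          + (∑ l ∈ Finset.Icc (j + 1) n,
              (aop n r i i m (Gop n r j l p w) - Gop n r j l p (aop n r i i m w)))
          + (∑ k ∈ Finset.Icc (i + 1) n,
              (Gop n r i k m (aop n r j j p w) - aop n r j j p (Gop n r i k m w)))
          + (∑ k ∈ Finset.Icc (i + 1) n, ∑ l ∈ Finset.Icc (j + 1) n,
              (Gop n r i k m (Gop n r j l p w) - Gop n r j l p (Gop n r i k m w))) := by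
      simp only [Finset.sum_sub_distrib, Finset.sum_add_distrib]
      rw [show (∑ l ∈ Finset.Icc (j + 1) n, ∑ k ∈ Finset.Icc (i + 1) n,
            Gop n r j l p (Gop n r i k m w))
          = ∑ k ∈ Finset.Icc (i + 1) n, ∑ l ∈ Finset.Icc (j + 1) n,
            Gop n r j l p (Gop n r i k m w) from Finset.sum_comm]
      abel
    rw [grouped, aop_aop i i j j m p w, sub_self,
      collapse_AH i j m p hi hi' w, collapse_GB i j m p hj hj' w,
      collapse_GG i j m p hi hi' hj hj' w]
    simp only [ite_smul, one_smul, zero_smul]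
    have esplit : ∀ (c : Prop) [Decidable c] (A S : FSp n),
        (if c then A + S else 0) = (if c then A else 0) + (if c then S else 0) := by
      intro c _ A S
      split_ifs <;> simp
    rw [esplit, esplit]
    abel
  refine ⟨key, fun h => ?_⟩
  rw [key]
  funext w
  rw [if_neg (fun hc => h (Or.inl hc)), if_neg (fun hc => h (Or.inr hc))]
  simp
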